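/- For every f ∈ H: 0 ≤ V_R(f, 1/2) − ‖f‖² and V_R(f, 1/2) − ‖f‖² = 2·(V_D(f) − ‖f‖²). -/

import Mathlib

open scoped RealInnerProductSpace

set_option maxHeartbeats 1000000
set_option synthInstance.maxHeartbeats 400000

noncomputable def VD {H : Type*} [NormedAddCommGroup H] [InnerProductSpace ℝ H]
    (P₁ P₂ : H →L[ℝ] H) (f : H) : ℝ :=
  ‖f‖ ^ 2
    + ∑' s : ℕ, ⟪f, ((P₁ * P₂) ^ s * P₁) f⟫
    + ∑' s : ℕ, ⟪f, ((P₁ * P₂) ^ (s + 1)) f⟫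
    + ∑' s : ℕ, ⟪f, ((P₂ * P₁) ^ s * P₂) f⟫
    + ∑' s : ℕ, ⟪f, ((P₂ * P₁) ^ (s + 1)) f⟫

noncomputable def VR {H : Type*} [NormedAddCommGroup H] [InnerProductSpace ℝ H]
    (P₁ P₂ : H →L[ℝ] H) (r : ℝ) (f : H) : ℝ :=
  ‖f‖ ^ 2 + 2 * ∑' t : ℕ, ⟪f, (((1 - r) • P₁ + r • P₂) ^ (t + 1)) f⟫

noncomputable def kOne (r : ℝ) : ℝ :=
  1 - r + r ^ 2 + Real.sqrt (r ^ 2 * (1 - r) ^ 2 + (1 - 2 * r) ^ 2)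

noncomputable def kTwo (r : ℝ) : ℝ :=
  (1 - r + r ^ 2 + Real.sqrt (r ^ 2 * (1 - r) ^ 2 + (1 - 2 * r) ^ 2)) / (2 * r * (1 - r))

noncomputable def kappa (τ r : ℝ) : ℝ := (τ + 1) / (2 * (r * τ + 1 - r))

noncomputable def VDdag {H : Type*} [NormedAddCommGroup H] [InnerProductSpace ℝ H]
    (P₁ P₂ : H →L[ℝ] H) (τ : ℝ) (f : H) : ℝ := ((1 + τ) / 2) * VD P₁ P₂ f

noncomputable def VRdag {H : Type*} [NormedAddCommGroup H] [InnerProductSpace ℝ H]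
    (P₁ P₂ : H →L[ℝ] H) (r τ : ℝ) (f : H) : ℝ := (r * τ + 1 - r) * VR P₁ P₂ r f

lemma aux_word {M : Type*} [Monoid M] (a b : M) :
    ∀ s : ℕ, a * (b * a) ^ s = (a * b) ^ s * a := by
  intro s
  induction s with
  | zero => simp
  | succ n ih =>
      rw [pow_succ, ← mul_assoc, ih, pow_succ]
      simp [mul_assoc]

lemma aux_absorb {M : Type*} [Monoid M] (a b : M) (ha : a * a = a) (s : ℕ) :
    a * (a * b) ^ (s + 1) = (a * b) ^ (s + 1) := by
  rw [pow_succ', ← mul_assoc, ← mul_assoc, ha]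

lemma aux_head {M : Type*} [Monoid M] (a b : M) (ha : a * a = a) (s : ℕ) :
    a * ((a * b) ^ s * a) = (a * b) ^ s * a := by
  cases s with
  | zero => simp [ha]
  | succ n => rw [← mul_assoc, aux_absorb a b ha n]

lemma aux_cross {M : Type*} [Monoid M] (a b : M) (s : ℕ) :
    a * ((b * a) ^ s * b) = (a * b) ^ (s + 1) := by
  rw [← mul_assoc, aux_word a b s, mul_assoc, pow_succ]

lemma aux_norm_le_one {H : Type*} [NormedAddCommGroup H] [InnerProductSpace ℝ H]
    [CompleteSpace H] (a : H →L[ℝ] H) (hsa : IsSelfAdjoint a) (hid : a * a = a) :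
    ‖a‖ ≤ 1 := by
  refine a.opNorm_le_bound zero_le_one (fun x => ?_)
  rw [one_mul]
  have hsym := ContinuousLinearMap.isSelfAdjoint_iff_isSymmetric.mp hsa
  have hax : a (a x) = a x := by
    have := DFunLike.congr_fun hid x
    simpa [ContinuousLinearMap.mul_apply] using this
  have h1 : ‖a x‖ ^ 2 = ⟪x, a x⟫ := by
    rw [← real_inner_self_eq_norm_sq]
    have h := hsym x (a x)
    simp only [ContinuousLinearMap.coe_coe] at h
    rw [h, hax]
  have h2 : ⟪x, a x⟫ ≤ ‖x‖ * ‖a x‖ := real_inner_le_norm x (a x)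
  nlinarith [norm_nonneg (a x), norm_nonneg x]

lemma aux_pos {H : Type*} [NormedAddCommGroup H] [InnerProductSpace ℝ H]
    [CompleteSpace H] (a : H →L[ℝ] H) (hsa : IsSelfAdjoint a) (hid : a * a = a) (x : H) :
    0 ≤ ⟪x, a x⟫ := by
  have hsym := ContinuousLinearMap.isSelfAdjoint_iff_isSymmetric.mp hsa
  have hax : a (a x) = a x := by
    have := DFunLike.congr_fun hid x
    simpa [ContinuousLinearMap.mul_apply] using this
  have h := hsym x (a x)
  simp only [ContinuousLinearMap.coe_coe] at h
  calc (0:ℝ) ≤ ⟪a x, a x⟫ := real_inner_self_nonneg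
    _ = ⟪x, a (a x)⟫ := h
    _ = ⟪x, a x⟫ := by rw [hax]

lemma aux_sum_bound {H : Type*} [NormedAddCommGroup H] [InnerProductSpace ℝ H]
    (x y : H →L[ℝ] H) (hy : ‖y‖ ≤ 1) (s : ℕ) : ‖x ^ s * y‖ ≤ ‖x‖ ^ s := by
  cases s with
  | zero => simpa using hy
  | succ n =>
      calc ‖x ^ (n + 1) * y‖ ≤ ‖x ^ (n + 1)‖ * ‖y‖ := norm_mul_le _ _
        _ ≤ ‖x‖ ^ (n + 1) * 1 :=
            mul_le_mul (norm_pow_le' x n.succ_pos) hy (norm_nonneg _) (by positivity)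
        _ = ‖x‖ ^ (n + 1) := mul_one _

theorem stmt16 {H : Type*} [NormedAddCommGroup H] [InnerProductSpace ℝ H] [CompleteSpace H]
    (P₁ P₂ : H →L[ℝ] H)
    (h1sa : IsSelfAdjoint P₁) (h1idem : P₁ * P₁ = P₁)
    (h2sa : IsSelfAdjoint P₂) (h2idem : P₂ * P₂ = P₂)
    (hnorm : ‖P₁ * P₂‖ < 1) (f : H) :
    0 ≤ VR P₁ P₂ (1 / 2) f - ‖f‖ ^ 2 ∧
    VR P₁ P₂ (1 / 2) f - ‖f‖ ^ 2 = 2 * (VD P₁ P₂ f - ‖f‖ ^ 2) := by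
  classical
  set q : H →L[ℝ] H := (2⁻¹ : ℝ) • P₁ + (2⁻¹ : ℝ) • P₂ with hq_def
  have hn1 : ‖P₁‖ ≤ 1 := aux_norm_le_one P₁ h1sa h1idem
  have hn2 : ‖P₂‖ ≤ 1 := aux_norm_le_one P₂ h2sa h2idem
  have hba : ‖P₂ * P₁‖ = ‖P₁ * P₂‖ := by
    conv_lhs => rw [← h1sa.star_eq, ← h2sa.star_eq, ← star_mul]
    exact norm_star (P₁ * P₂)
  have hnn : (0:ℝ) ≤ ‖P₁ * P₂‖ := norm_nonneg _
  set ρ : ℝ := (1 + ‖P₁ * P₂‖) / 2 with hρ_def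
  have hρ1 : ρ < 1 := by rw [hρ_def]; linarith
  have hρ0 : (0:ℝ) ≤ ρ := by rw [hρ_def]; linarith
  have hqn : ‖q‖ ≤ 1 := by
    calc ‖q‖ ≤ ‖(2⁻¹ : ℝ) • P₁‖ + ‖(2⁻¹ : ℝ) • P₂‖ := norm_add_le _ _
      _ = 2⁻¹ * ‖P₁‖ + 2⁻¹ * ‖P₂‖ := by rw [norm_smul (2⁻¹:ℝ) P₁, norm_smul (2⁻¹:ℝ) P₂]; norm_num
      _ ≤ 1 := by linarith
  have hq2 : ‖q * q‖ ≤ ρ := by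
    have hqq : q * q = (4⁻¹:ℝ) • (P₁ + P₁ * P₂ + P₂ * P₁ + P₂) := by
      rw [hq_def]
      simp only [add_mul, mul_add, smul_mul_assoc, mul_smul_comm, h1idem, h2idem]
      module
    have h4 : ‖P₁ + P₁ * P₂ + P₂ * P₁ + P₂‖ ≤ 1 + ‖P₁ * P₂‖ + ‖P₁ * P₂‖ + 1 := by
      calc ‖P₁ + P₁ * P₂ + P₂ * P₁ + P₂‖
          ≤ ‖P₁ + P₁ * P₂ + P₂ * P₁‖ + ‖P₂‖ := norm_add_le _ _
        _ ≤ ‖P₁ + P₁ * P₂‖ + ‖P₂ * P₁‖ + ‖P₂‖ := by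
            have := norm_add_le (P₁ + P₁ * P₂) (P₂ * P₁); linarith
        _ ≤ ‖P₁‖ + ‖P₁ * P₂‖ + ‖P₂ * P₁‖ + ‖P₂‖ := by
            have := norm_add_le P₁ (P₁ * P₂); linarith
        _ ≤ 1 + ‖P₁ * P₂‖ + ‖P₁ * P₂‖ + 1 := by rw [hba]; linarith
    calc ‖q * q‖ = 4⁻¹ * ‖P₁ + P₁ * P₂ + P₂ * P₁ + P₂‖ := by
          rw [hqq, norm_smul (4⁻¹:ℝ) (P₁ + P₁ * P₂ + P₂ * P₁ + P₂)]; norm_num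
      _ ≤ 4⁻¹ * (1 + ‖P₁ * P₂‖ + ‖P₁ * P₂‖ + 1) := by linarith
      _ = ρ := by rw [hρ_def]; ring
  -- summability
  have hgeo : Summable (fun s : ℕ => ‖P₁ * P₂‖ ^ s) :=
    summable_geometric_of_lt_one hnn hnorm
  have hρ_geo : Summable (fun k : ℕ => ρ ^ k) := summable_geometric_of_lt_one hρ0 hρ1
  have sA : Summable (fun s : ℕ => (P₁ * P₂) ^ s * P₁) :=
    Summable.of_norm_bounded hgeo (fun s => aux_sum_bound _ _ hn1 s)
  have sB : Summable (fun s : ℕ => (P₁ * P₂) ^ (s + 1)) := by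
    refine Summable.of_norm_bounded (hgeo.mul_right ‖P₁ * P₂‖) (fun s => ?_)
    calc ‖(P₁ * P₂) ^ (s + 1)‖ ≤ ‖P₁ * P₂‖ ^ (s + 1) := norm_pow_le' _ s.succ_pos
      _ = ‖P₁ * P₂‖ ^ s * ‖P₁ * P₂‖ := pow_succ _ _
  have sC : Summable (fun s : ℕ => (P₂ * P₁) ^ s * P₂) := by
    refine Summable.of_norm_bounded hgeo (fun s => ?_)
    have h := aux_sum_bound (P₂ * P₁) P₂ hn2 s
    rwa [hba] at h
  have sD : Summable (fun s : ℕ => (P₂ * P₁) ^ (s + 1)) := by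
    refine Summable.of_norm_bounded (hgeo.mul_right ‖P₁ * P₂‖) (fun s => ?_)
    calc ‖(P₂ * P₁) ^ (s + 1)‖ ≤ ‖P₂ * P₁‖ ^ (s + 1) := norm_pow_le' _ s.succ_pos
      _ = ‖P₁ * P₂‖ ^ s * ‖P₁ * P₂‖ := by rw [hba, pow_succ]
  have hq2k : ∀ k : ℕ, ‖q ^ (2 * k)‖ ≤ ρ ^ k := by
    intro k
    induction k with
    | zero => simp only [mul_zero, pow_zero]; exact ContinuousLinearMap.norm_id_le
    | succ n ih =>
        have h1 : q ^ (2 * (n + 1)) = q ^ (2 * n) * (q * q) := by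
          rw [← pow_two, ← pow_add]; ring_nf
        calc ‖q ^ (2 * (n + 1))‖ ≤ ‖q ^ (2 * n)‖ * ‖q * q‖ := by
              rw [h1]; exact norm_mul_le _ _
          _ ≤ ρ ^ n * ρ := mul_le_mul ih hq2 (norm_nonneg _) (by positivity)
          _ = ρ ^ (n + 1) := (pow_succ _ _).symm
  have hqpow : ∀ k : ℕ, ‖q ^ (2 * k + 1)‖ ≤ ρ ^ k := by
    intro k
    calc ‖q ^ (2 * k + 1)‖ = ‖q ^ (2 * k) * q‖ := by rw [pow_succ]
      _ ≤ ‖q ^ (2 * k)‖ * ‖q‖ := norm_mul_le _ _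
      _ ≤ ρ ^ k * 1 := mul_le_mul (hq2k k) hqn (norm_nonneg _) (by positivity)
      _ = ρ ^ k := mul_one _
  have hqpow2 : ∀ k : ℕ, ‖q ^ (2 * k + 1 + 1)‖ ≤ ρ ^ k := by
    intro k
    calc ‖q ^ (2 * k + 1 + 1)‖ = ‖q ^ (2 * k + 1) * q‖ := by rw [pow_succ]
      _ ≤ ‖q ^ (2 * k + 1)‖ * ‖q‖ := norm_mul_le _ _
      _ ≤ ρ ^ k * 1 := mul_le_mul (hqpow k) hqn (norm_nonneg _) (by positivity)
      _ = ρ ^ k := mul_one _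
  have sT : Summable (fun t : ℕ => q ^ (t + 1)) := by
    apply Summable.even_add_odd
    · exact Summable.of_norm_bounded hρ_geo (fun k => hqpow k)
    · exact Summable.of_norm_bounded hρ_geo (fun k => hqpow2 k)
  -- the operator sums
  set A : H →L[ℝ] H := ∑' s : ℕ, (P₁ * P₂) ^ s * P₁ with hA_def
  set B : H →L[ℝ] H := ∑' s : ℕ, (P₁ * P₂) ^ (s + 1) with hB_def
  set C : H →L[ℝ] H := ∑' s : ℕ, (P₂ * P₁) ^ s * P₂ with hC_def
  set D : H →L[ℝ] H := ∑' s : ℕ, (P₂ * P₁) ^ (s + 1) with hD_def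
  set T : H →L[ℝ] H := ∑' t : ℕ, q ^ (t + 1) with hT_def
  set S : H →L[ℝ] H := A + B + C + D with hS_def
  have hA1 : P₁ * A = A := by
    rw [hA_def, ← Summable.tsum_mul_left P₁ sA]
    exact tsum_congr (fun s => aux_head P₁ P₂ h1idem s)
  have hB1 : P₁ * B = B := by
    rw [hB_def, ← Summable.tsum_mul_left P₁ sB]
    exact tsum_congr (fun s => aux_absorb P₁ P₂ h1idem s)
  have hC1 : P₁ * C = B := by
    rw [hC_def, hB_def, ← Summable.tsum_mul_left P₁ sC]
    exact tsum_congr (fun s => aux_cross P₁ P₂ s)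
  have hA0 : A = P₁ + ∑' s : ℕ, (P₁ * P₂) ^ (s + 1) * P₁ := by
    rw [hA_def, Summable.tsum_eq_zero_add sA]; simp
  have hD1 : P₁ * D = A - P₁ := by
    rw [hD_def, ← Summable.tsum_mul_left P₁ sD,
      tsum_congr (fun s => aux_word P₁ P₂ (s + 1)), hA0]
    abel
  have hC2 : P₂ * C = C := by
    rw [hC_def, ← Summable.tsum_mul_left P₂ sC]
    exact tsum_congr (fun s => aux_head P₂ P₁ h2idem s)
  have hD2 : P₂ * D = D := by
    rw [hD_def, ← Summable.tsum_mul_left P₂ sD]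
    exact tsum_congr (fun s => aux_absorb P₂ P₁ h2idem s)
  have hA2 : P₂ * A = D := by
    rw [hA_def, hD_def, ← Summable.tsum_mul_left P₂ sA]
    exact tsum_congr (fun s => aux_cross P₂ P₁ s)
  have hC0 : C = P₂ + ∑' s : ℕ, (P₂ * P₁) ^ (s + 1) * P₂ := by
    rw [hC_def, Summable.tsum_eq_zero_add sC]; simp
  have hB2 : P₂ * B = C - P₂ := by
    rw [hB_def, ← Summable.tsum_mul_left P₂ sB,
      tsum_congr (fun s => aux_word P₂ P₁ (s + 1)), hC0]
    abel
  have hS : q * S = S - q := by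
    have e1 : P₁ * S = A + B + B + (A - P₁) := by
      rw [hS_def, mul_add, mul_add, mul_add, hA1, hB1, hC1, hD1]
    have e2 : P₂ * S = D + (C - P₂) + C + D := by
      rw [hS_def, mul_add, mul_add, mul_add, hA2, hB2, hC2, hD2]
    have e3 : q * S = (2⁻¹:ℝ) • (P₁ * S) + (2⁻¹:ℝ) • (P₂ * S) := by
      rw [hq_def, add_mul, smul_mul_assoc, smul_mul_assoc]
    rw [e3, e1, e2, hS_def, hq_def]
    module
  have hT : q * T = T - q := by
    rw [hT_def, ← Summable.tsum_mul_left q sT,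
      tsum_congr (fun t => (pow_succ' q (t + 1)).symm), Summable.tsum_eq_zero_add sT]
    simp
  have hST : S = T := by
    have hE : q * (S - T) = S - T := by rw [mul_sub, hS, hT]; abel
    have hE2 : S - T = (q * q) * (S - T) := by rw [mul_assoc, hE, hE]
    have hle : ‖S - T‖ ≤ ρ * ‖S - T‖ := by
      calc ‖S - T‖ = ‖(q * q) * (S - T)‖ := by rw [← hE2]
        _ ≤ ‖q * q‖ * ‖S - T‖ := norm_mul_le _ _
        _ ≤ ρ * ‖S - T‖ := mul_le_mul_of_nonneg_right hq2 (norm_nonneg _)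
    have h0 : ‖S - T‖ = 0 := by nlinarith [norm_nonneg (S - T)]
    exact sub_eq_zero.mp (norm_eq_zero.mp h0)
  -- the evaluation functional
  set φ : (H →L[ℝ] H) →L[ℝ] ℝ :=
    (innerSL ℝ f).comp (ContinuousLinearMap.apply ℝ H f) with hφ_def
  have hφ : ∀ g : H →L[ℝ] H, φ g = ⟪f, g f⟫ := fun g => rfl
  have eA : (∑' s : ℕ, ⟪f, ((P₁ * P₂) ^ s * P₁) f⟫) = φ A := by
    rw [hA_def, φ.map_tsum sA]
    exact tsum_congr fun s => (hφ _).symm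
  have eB : (∑' s : ℕ, ⟪f, ((P₁ * P₂) ^ (s + 1)) f⟫) = φ B := by
    rw [hB_def, φ.map_tsum sB]
    exact tsum_congr fun s => (hφ _).symm
  have eC : (∑' s : ℕ, ⟪f, ((P₂ * P₁) ^ s * P₂) f⟫) = φ C := by
    rw [hC_def, φ.map_tsum sC]
    exact tsum_congr fun s => (hφ _).symm
  have eD : (∑' s : ℕ, ⟪f, ((P₂ * P₁) ^ (s + 1)) f⟫) = φ D := by
    rw [hD_def, φ.map_tsum sD]
    exact tsum_congr fun s => (hφ _).symm
  have eT : (∑' t : ℕ, ⟪f, (q ^ (t + 1)) f⟫) = φ T := by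
    rw [hT_def, φ.map_tsum sT]
    exact tsum_congr fun t => (hφ _).symm
  have hφS : φ S = φ A + φ B + φ C + φ D := by
    rw [hS_def, map_add, map_add, map_add]
  have hVD : VD P₁ P₂ f - ‖f‖ ^ 2 = φ S := by
    simp only [VD]
    rw [eA, eB, eC, eD, hφS]
    ring
  have hq' : ((1 - (1/2 : ℝ)) • P₁ + (1/2 : ℝ) • P₂) = q := by
    rw [hq_def]; norm_num
  have hVR : VR P₁ P₂ (1/2) f - ‖f‖ ^ 2 = 2 * φ T := by
    simp only [VR, hq']
    rw [eT]
    ring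
  -- positivity
  have hqsa : IsSelfAdjoint q := by
    rw [hq_def]
    exact ((IsSelfAdjoint.all _).smul h1sa).add ((IsSelfAdjoint.all _).smul h2sa)
  have hsymk : ∀ k : ℕ, ∀ x y : H, ⟪(q ^ k) x, y⟫ = ⟪x, (q ^ k) y⟫ := fun k =>
    ContinuousLinearMap.isSelfAdjoint_iff_isSymmetric.mp (hqsa.pow k)
  have hqpos : ∀ x : H, 0 ≤ ⟪x, q x⟫ := by
    intro x
    have e : ⟪x, q x⟫ = 2⁻¹ * ⟪x, P₁ x⟫ + 2⁻¹ * ⟪x, P₂ x⟫ := by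
      rw [hq_def]
      simp [inner_add_right, real_inner_smul_right]
    have u1 := aux_pos P₁ h1sa h1idem x
    have u2 := aux_pos P₂ h2sa h2idem x
    rw [e]; linarith
  have hterm : ∀ t : ℕ, 0 ≤ ⟪f, (q ^ (t + 1)) f⟫ := by
    intro t
    rcases Nat.even_or_odd (t + 1) with he | ho
    · obtain ⟨k, hk⟩ := he
      rw [hk, pow_add, ContinuousLinearMap.mul_apply, ← hsymk k]
      exact real_inner_self_nonneg
    · obtain ⟨k, hk⟩ := ho
      have hp : q ^ (t + 1) = q ^ k * q * q ^ k := by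
        rw [hk, show 2 * k + 1 = k + 1 + k from by ring, pow_add, pow_add, pow_one]
      rw [hp, ContinuousLinearMap.mul_apply, ContinuousLinearMap.mul_apply, ← hsymk k]
      exact hqpos _
  have hTnn : 0 ≤ φ T := by
    rw [← eT]
    exact tsum_nonneg hterm
  constructor
  · rw [hVR]; linarith
  · rw [hVR, hVD, hST]
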